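/- Let K be a field of arbitrary characteristic and R = K[x_1,…,x_n]. For every r ≥ 1, every j ≥ 1, each 1 ≤ i ≤ n, and every f ∈ R, the Euler operators satisfy E_r(∂_i^{[j]}(f)) = ∂_i^{[j]}(E_r(f)) − Σ_{k=1}^{min(j,r)} binom(j,k)·E_{r−k}(∂_i^{[j]}(f)), where E_0 is the identity. -/

import Mathlib

/-- The divided-power partial derivative `∂_i^{[j]}` on `K[x_1,…,x_n]`, determined on
monomials by `∂_i^{[j]}(x^a) = binom(a_i, j) • x^{a - j·e_i}` (zero when `a_i < j`). -/
noncomputable def dpDeriv (K : Type*) [CommRing K] {n : ℕ} (i : Fin n) (j : ℕ) :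
    MvPolynomial (Fin n) K →ₗ[K] MvPolynomial (Fin n) K :=
  (Finsupp.lsum K fun a : Fin n →₀ ℕ =>
    (((a i).choose j : K)) •
      (MvPolynomial.monomial (a - Finsupp.single i j) : K →ₗ[K] MvPolynomial (Fin n) K))
    ∘ₗ (AddMonoidAlgebra.coeffLinearEquiv K).toLinearMap

/-- The `r`-th Euler operator `E_r = Σ_{i_1+⋯+i_n=r} x_1^{i_1}⋯x_n^{i_n} ∂_1^{[i_1]}⋯∂_n^{[i_n]}`
on `K[x_1,…,x_n]`. -/
noncomputable def eulerOp (K : Type*) [CommRing K] (n : ℕ) (r : ℕ) :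
    MvPolynomial (Fin n) K →ₗ[K] MvPolynomial (Fin n) K :=
  ∑ c ∈ Finset.Nat.antidiagonalTuple n r,
    LinearMap.mulLeft K (MvPolynomial.monomial (Finsupp.equivFunOnFinite.symm c) (1 : K)) ∘ₗ
      ((List.finRange n).map fun i => dpDeriv K i (c i)).prod

lemma dpDeriv_monomial (K : Type*) [CommRing K] {n : ℕ} (i : Fin n) (j : ℕ)
    (a : Fin n →₀ ℕ) (b : K) :
    dpDeriv K i j (MvPolynomial.monomial a b) =
      ((a i).choose j : K) • MvPolynomial.monomial (a - Finsupp.single i j) b := by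
  rw [dpDeriv, LinearMap.comp_apply, LinearEquiv.coe_coe,
    AddMonoidAlgebra.coeffLinearEquiv_apply, ← MvPolynomial.single_eq_monomial]
  erw [AddMonoidAlgebra.coeff_single, Finsupp.lsum_single]
  simp [MvPolynomial.single_eq_monomial]
lemma sum_single_list_apply {n : ℕ} (c : Fin n → ℕ) (l : List (Fin n)) (hl : l.Nodup) (t : Fin n) :
    ((l.map fun t' => Finsupp.single t' (c t')).sum) t = if t ∈ l then c t else 0 := by
  induction l with
  | nil => simp
  | cons s l ih =>
    simp only [List.map_cons, List.sum_cons, Finsupp.add_apply, List.mem_cons]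
    rw [ih hl.of_cons]
    rcases eq_or_ne t s with rfl | hts
    · have : t ∉ l := hl.notMem
      simp [this, Finsupp.single_apply]
    · simp only [Finsupp.single_apply, if_neg (Ne.symm hts), zero_add]
      by_cases h : t ∈ l <;> simp [h, hts]
lemma prodDp (K : Type*) [CommRing K] {n : ℕ} (c : Fin n → ℕ) (l : List (Fin n))
    (hl : l.Nodup) (a : Fin n →₀ ℕ) (b : K) :
    ((l.map fun t => dpDeriv K t (c t)).prod) (MvPolynomial.monomial a b)
      = (((l.map fun t => (a t).choose (c t)).prod : ℕ) : K) •
          MvPolynomial.monomial (a - (l.map fun t => Finsupp.single t (c t)).sum) b := by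
  induction l with
  | nil => simp
  | cons s l ih =>
    have hs : s ∉ l := hl.notMem
    simp only [List.map_cons, List.prod_cons, List.sum_cons]
    rw [Module.End.mul_apply, ih hl.of_cons, map_smul, dpDeriv_monomial]
    have h1 : (a - (l.map fun t => Finsupp.single t (c t)).sum) s = a s := by
      rw [Finsupp.tsub_apply, sum_single_list_apply c l hl.of_cons]
      simp [hs]
    have h2 : a - (l.map fun t => Finsupp.single t (c t)).sum - Finsupp.single s (c s)
        = a - (Finsupp.single s (c s) + (l.map fun t => Finsupp.single t (c t)).sum) := by
      rw [tsub_tsub, add_comm]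
    rw [h1, h2, smul_smul, Nat.cast_mul, mul_comm]
lemma multiVandermonde : ∀ (k n : ℕ) (a : Fin k → ℕ),
    ∑ c ∈ Finset.Nat.antidiagonalTuple k n, ∏ t, (a t).choose (c t)
      = (∑ t, a t).choose n := by
  intro k
  induction k with
  | zero =>
    intro n a
    cases n with
    | zero => simp
    | succ n => simp [Finset.Nat.antidiagonalTuple_zero_succ]
  | succ k ih =>
    intro n a
    have hrhs : (∑ t, a t).choose n
        = ∑ ij ∈ Finset.HasAntidiagonal.antidiagonal n,
            ∑ x ∈ Finset.Nat.antidiagonalTuple k ij.2,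
              (a 0).choose ij.1 * ∏ t, (a t.succ).choose (x t) := by
      rw [Fin.sum_univ_succ, Nat.add_choose_eq]
      refine Finset.sum_congr rfl fun ij _ => ?_
      rw [← Finset.mul_sum, ih ij.2 fun t : Fin k => a t.succ]
    rw [hrhs, Finset.sum_sigma']
    refine Finset.sum_bij'
      (fun (c : Fin (k+1) → ℕ) _ => (⟨(c 0, ∑ t : Fin k, c t.succ), Fin.tail c⟩ :
        Σ _ : ℕ × ℕ, Fin k → ℕ))
      (fun x _ => Fin.cons x.1.1 x.2) ?_ ?_ ?_ ?_ ?_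
    · intro c hc
      rw [Finset.Nat.mem_antidiagonalTuple] at hc
      rw [Finset.mem_sigma, Finset.HasAntidiagonal.mem_antidiagonal]
      constructor
      · rw [← hc, Fin.sum_univ_succ]
      · rw [Finset.Nat.mem_antidiagonalTuple]
        rfl
    · intro x hx
      rw [Finset.mem_sigma, Finset.HasAntidiagonal.mem_antidiagonal,
        Finset.Nat.mem_antidiagonalTuple] at hx
      rw [Finset.Nat.mem_antidiagonalTuple, Fin.sum_univ_succ, Fin.cons_zero]
      simp only [Fin.cons_succ]
      rw [hx.2, hx.1]
    · intro c hc
      exact Fin.cons_self_tail c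
    · intro x hx
      rw [Finset.mem_sigma, Finset.HasAntidiagonal.mem_antidiagonal,
        Finset.Nat.mem_antidiagonalTuple] at hx
      obtain ⟨⟨p, q⟩, y⟩ := x
      dsimp only
      simp only [Fin.cons_zero, Fin.tail_cons, Fin.cons_succ]
      simp only at hx
      rw [hx.2]
    · intro c hc
      simp only [Fin.prod_univ_succ, Fin.cons_succ, Fin.tail]
lemma finRange_sum_single_apply {n : ℕ} (c : Fin n → ℕ) (t : Fin n) :
    (((List.finRange n).map fun t' => Finsupp.single t' (c t')).sum) t = c t := by
  rw [sum_single_list_apply c _ (List.nodup_finRange n)]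
  simp
lemma eulerOp_monomial (K : Type*) [CommRing K] {n : ℕ} (r : ℕ) (a : Fin n →₀ ℕ) (b : K) :
    eulerOp K n r (MvPolynomial.monomial a b)
      = (((∑ t, a t).choose r : ℕ) : K) • MvPolynomial.monomial a b := by
  rw [eulerOp, LinearMap.sum_apply]
  have key : ∀ c ∈ Finset.Nat.antidiagonalTuple n r,
      (LinearMap.mulLeft K (MvPolynomial.monomial (Finsupp.equivFunOnFinite.symm c) (1 : K)) ∘ₗ
        ((List.finRange n).map fun i => dpDeriv K i (c i)).prod) (MvPolynomial.monomial a b)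
      = ((∏ t, (a t).choose (c t) : ℕ) : K) • MvPolynomial.monomial a b := by
    intro c _
    rw [LinearMap.comp_apply, prodDp K c _ (List.nodup_finRange n), map_smul,
      LinearMap.mulLeft_apply, MvPolynomial.monomial_mul, one_mul, ← Fin.prod_univ_def]
    set S := ((List.finRange n).map fun t => Finsupp.single t (c t)).sum with hS
    have hES : Finsupp.equivFunOnFinite.symm c = S := by
      ext t
      rw [hS, finRange_sum_single_apply]
      simp
    rw [hES]
    by_cases h : ∀ t, c t ≤ a t
    · have hle : S ≤ a := by
        rw [Finsupp.le_def]
        intro t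
        rw [hS, finRange_sum_single_apply]
        exact h t
      rw [add_tsub_cancel_of_le hle]
    · push_neg at h
      obtain ⟨t, ht⟩ := h
      have : (∏ t, (a t).choose (c t)) = 0 :=
        Finset.prod_eq_zero (Finset.mem_univ t) (Nat.choose_eq_zero_of_lt ht)
      rw [this]
      simp
  rw [Finset.sum_congr rfl key, ← Finset.sum_smul]
  congr 1
  rw [← Nat.cast_sum, multiVandermonde]
lemma choose_sub_identity (m j r : ℕ) (hjm : j ≤ m) :
    m.choose r = (m - j).choose r +
      ∑ k ∈ Finset.Icc 1 (min j r), j.choose k * (m - j).choose (r - k) := by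
  have h := Nat.add_choose_eq j (m - j) r
  rw [Nat.add_sub_cancel' hjm] at h
  rw [h, Finset.Nat.sum_antidiagonal_eq_sum_range_succ_mk, Finset.sum_range_succ']
  simp only [Nat.choose_zero_right, one_mul, Nat.sub_zero]
  rw [add_comm]
  congr 1
  have step1 : ∑ k ∈ Finset.range r, j.choose (k + 1) * (m - j).choose (r - (k + 1))
      = ∑ k ∈ Finset.Icc 1 r, j.choose k * (m - j).choose (r - k) := by
    refine Finset.sum_nbij' (fun k => k + 1) (fun k => k - 1) ?_ ?_ ?_ ?_ ?_ <;>
      intro k hk <;> simp only [Finset.mem_range, Finset.mem_Icc] at * <;> try omega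
  rw [step1]
  refine (Finset.sum_subset ?_ ?_).symm
  · exact Finset.Icc_subset_Icc le_rfl (min_le_right j r)
  · intro k hk hk'
    simp only [Finset.mem_Icc] at hk hk'
    have : j < k := by omega
    rw [Nat.choose_eq_zero_of_lt this, zero_mul]

/-- For every `r ≥ 1`, `j ≥ 1`, each `i`, and every polynomial `f`,
`E_r(∂_i^{[j]}(f)) = ∂_i^{[j]}(E_r(f)) − Σ_{k=1}^{min(j,r)} binom(j,k) • E_{r-k}(∂_i^{[j]}(f))`,
where `E_0` is the identity. -/
theorem eulerOp_dpDeriv (K : Type*) [Field K] (n : ℕ) (r j : ℕ) (hr : 1 ≤ r) (hj : 1 ≤ j)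
    (i : Fin n) (f : MvPolynomial (Fin n) K) :
    eulerOp K n r (dpDeriv K i j f) =
      dpDeriv K i j (eulerOp K n r f) -
        ∑ k ∈ Finset.Icc 1 (min j r),
          (j.choose k : K) • eulerOp K n (r - k) (dpDeriv K i j f) := by
  induction f using MvPolynomial.induction_on' with
  | add p q hp hq =>
    simp only [map_add, smul_add, Finset.sum_add_distrib]
    rw [hp, hq]
    abel
  | monomial a b =>
    set a' : Fin n →₀ ℕ := a - Finsupp.single i j with ha'
    set m := ∑ t, a t with hm
    set m' := ∑ t, a' t with hm'
    simp only [dpDeriv_monomial, map_smul, eulerOp_monomial, smul_smul, ← hm, ← hm', ← ha']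
    rw [← Finset.sum_smul, ← sub_smul]
    congr 1
    by_cases h : a i < j
    · simp [Nat.choose_eq_zero_of_lt h]
    · push_neg at h
      have hm'eq : m' = m - j := by
        rw [hm', hm, ha']
        simp only [Finsupp.tsub_apply]
        rw [Finset.sum_tsub_distrib]
        · congr 1
          simp [Finsupp.single_apply, Finset.sum_ite_eq']
        · intro t _
          rcases eq_or_ne t i with rfl | ht
          · simpa using h
          · simp [Finsupp.single_apply, Ne.symm ht]
      have hjm : j ≤ m :=
        le_trans h (Finset.single_le_sum (fun t _ => Nat.zero_le (a t)) (Finset.mem_univ i))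
      rw [hm'eq, choose_sub_identity m j r hjm]
      push_cast
      have hsum : ∑ k ∈ Finset.Icc 1 (min j r),
          (j.choose k : K) * ((a i).choose j * (m - j).choose (r - k))
          = (∑ k ∈ Finset.Icc 1 (min j r),
              (j.choose k : K) * (m - j).choose (r - k)) * (a i).choose j := by
        rw [Finset.sum_mul]
        exact Finset.sum_congr rfl fun k _ => by ring
      rw [hsum]
      ring
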